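/- Let A : ℝ → ℝ be smooth and let 𝔄 : ℝ → ℝ be smooth with 𝔄′ = A. Then for every smooth solution u : ℝ × ℝ → ℝ of the equation e^x u_t = (A(u)u_x)_x + e^x u_x (the case B = 1, f = e^x, h = e^x), both pairs F₁ = e^{x+t}u, G₁ = −e^t(A(u)u_x + e^x u) and F₂ = e^{x+t}(x+t)u, G₂ = −e^t(x+t)(A(u)u_x + e^x u) + e^t𝔄(u) satisfy the conservation-law identity ∂_t F + ∂_x G = 0 at every point of ℝ × ℝ. -/

import Mathlib

open Set Real
open scoped ContDiff

/-- For the equation `e^x u_t = (A(u) u_x)_x + e^x u_x` (the case `B = 1`,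
`f = e^x`, `h = e^x`), both pairs `F₁ = e^{x+t} u`, `G₁ = -e^t (A(u) u_x + e^x u)` and
`F₂ = e^{x+t}(x+t) u`, `G₂ = -e^t (x+t)(A(u) u_x + e^x u) + e^t 𝔄(u)` (where `𝔄' = A`)
are conserved vectors. -/
theorem conservation_laws_case_B_one_f_exp_h_exp
    (A FA : ℝ → ℝ) (hA : ContDiff ℝ ∞ A)
    (hFA : ContDiff ℝ ∞ FA) (hFA' : ∀ v : ℝ, HasDerivAt FA (A v) v)
    (u : ℝ → ℝ → ℝ)
    (hu : ContDiff ℝ ∞ (fun p : ℝ × ℝ => u p.1 p.2))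
    (hpde : ∀ t x : ℝ,
      Real.exp x * deriv (fun s => u s x) t
        = deriv (fun y => A (u t y) * deriv (fun z => u t z) y) x
          + Real.exp x * deriv (fun y => u t y) x) :
    ∀ t x : ℝ,
      (deriv (fun s => Real.exp (x + s) * u s x) t
        + deriv (fun y =>
            -(Real.exp t * (A (u t y) * deriv (fun z => u t z) y
                + Real.exp y * u t y))) x = 0)
      ∧ (deriv (fun s => Real.exp (x + s) * (x + s) * u s x) t
        + deriv (fun y =>
            -(Real.exp t * (y + t) * (A (u t y) * deriv (fun z => u t z) y
                + Real.exp y * u t y))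
              + Real.exp t * FA (u t y)) x = 0) := by
  intro t x
  -- one-variable slices are smooth
  have hut : ContDiff ℝ ∞ (fun y => u t y) :=
    hu.comp ((contDiff_const (c := t)).prodMk contDiff_id)
  have hus : ContDiff ℝ ∞ (fun s => u s x) :=
    hu.comp (contDiff_id.prodMk (contDiff_const (c := x)))
  have hq : ContDiff ℝ ∞ (deriv (fun y => u t y)) :=
    (contDiff_infty_iff_deriv.mp hut).2
  set q : ℝ → ℝ := deriv (fun y => u t y) with hqdef
  have hux : HasDerivAt (fun y => u t y) (q x) x :=
    ((hut.differentiable (by norm_num)) x).hasDerivAt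
  have hutd : HasDerivAt (fun s => u s x) (deriv (fun s => u s x) t) t :=
    ((hus.differentiable (by norm_num)) t).hasDerivAt
  set ut : ℝ := deriv (fun s => u s x) t with hutdef
  set ux : ℝ := q x with huxdef
  -- the flux term y ↦ A(u t y) * q y is differentiable
  have hg : Differentiable ℝ (fun y => A (u t y) * q y) :=
    ((hA.differentiable (by norm_num)).comp (hut.differentiable (by norm_num))).mul
      (hq.differentiable (by norm_num))
  set P : ℝ := deriv (fun y => A (u t y) * q y) x with hPdef
  have hgP : HasDerivAt (fun y => A (u t y) * q y) P x := (hg x).hasDerivAt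
  -- the pde at (t, x)
  have pde : Real.exp x * ut = P + Real.exp x * ux := hpde t x
  -- derivative of y ↦ exp y * u t y
  have hE : HasDerivAt (fun y => Real.exp y * u t y)
      (Real.exp x * u t x + Real.exp x * ux) x :=
    (Real.hasDerivAt_exp x).mul hux
  -- derivative of s ↦ exp (x + s)
  have hexs : HasDerivAt (fun s => Real.exp (x + s)) (Real.exp (x + t) * 1) t :=
    (((hasDerivAt_id t).const_add x)).exp
  -- derivative of y ↦ FA (u t y)
  have hFAu : HasDerivAt (fun y => FA (u t y)) (A (u t x) * ux) x :=
    (hFA' (u t x)).comp x hux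
  constructor
  · have h1 : HasDerivAt (fun s => Real.exp (x + s) * u s x)
        (Real.exp (x + t) * 1 * u t x + Real.exp (x + t) * ut) t :=
      hexs.mul hutd
    have h2 : HasDerivAt (fun y =>
        -(Real.exp t * (A (u t y) * q y + Real.exp y * u t y)))
        (-(Real.exp t * (P + (Real.exp x * u t x + Real.exp x * ux)))) x :=
      ((hgP.add hE).const_mul (Real.exp t)).neg
    rw [h1.deriv, h2.deriv, Real.exp_add]
    linear_combination Real.exp t * pde
  · have h1 : HasDerivAt (fun s => Real.exp (x + s) * (x + s) * u s x)
        ((Real.exp (x + t) * 1 * (x + t) + Real.exp (x + t) * 1) * u t x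
          + Real.exp (x + t) * (x + t) * ut) t :=
      (hexs.mul ((hasDerivAt_id t).const_add x)).mul hutd
    have h2 : HasDerivAt (fun y =>
        -(Real.exp t * (y + t) * (A (u t y) * q y + Real.exp y * u t y))
          + Real.exp t * FA (u t y))
        (-(Real.exp t * 1 * (A (u t x) * ux + Real.exp x * u t x)
            + Real.exp t * (x + t) * (P + (Real.exp x * u t x + Real.exp x * ux)))
          + Real.exp t * (A (u t x) * ux)) x :=
      ((((hasDerivAt_id x).add_const t).const_mul (Real.exp t)).mul
        (hgP.add hE)).neg.add (hFAu.const_mul (Real.exp t))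
    rw [h1.deriv, h2.deriv, Real.exp_add]
    linear_combination (Real.exp t * (x + t)) * pde
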